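/- Let k ≥ 1 be a natural number and let g* = (1/(k+1))^{1/k}. If g* ≠ 1/2, then p* = (g* − √(g*(1−g*))) / (2g* − 1) satisfies 0 ≤ p* ≤ 1 and (p*)^2 / ((p*)^2 + (1−p*)^2) = g*. -/

import Mathlib

/-- The basis-choice probability p* for which iterative sifting with quotas
n = 1 and k samples uniformly. -/
theorem stmt_2 (k : ℕ) (hk : 1 ≤ k)
    (gstar pstar : ℝ)
    (hg : gstar = ((1 : ℝ) / (k + 1)) ^ ((1 : ℝ) / k))
    (hgne : gstar ≠ 1 / 2)
    (hp : pstar = (gstar - Real.sqrt (gstar * (1 - gstar))) / (2 * gstar - 1)) :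
    0 ≤ pstar ∧ pstar ≤ 1 ∧
      pstar ^ 2 / (pstar ^ 2 + (1 - pstar) ^ 2) = gstar := by
  have hk1 : (1:ℝ) ≤ k := by exact_mod_cast hk
  have hb0 : (0:ℝ) < 1 / (k + 1) := by positivity
  have hb1 : (1:ℝ) / (k + 1) < 1 := by
    rw [div_lt_one (by linarith)]; linarith
  have hg0 : 0 < gstar := by rw [hg]; positivity
  have hg1 : gstar < 1 := by
    rw [hg]
    exact Real.rpow_lt_one hb0.le hb1 (by positivity)
  set s := Real.sqrt (gstar * (1 - gstar)) with hs
  have hs0 : 0 ≤ s := Real.sqrt_nonneg _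
  have hs2 : s ^ 2 = gstar * (1 - gstar) := by
    rw [hs, sq, Real.mul_self_sqrt (by nlinarith)]
  have hd : 2 * gstar - 1 ≠ 0 := by
    intro h; apply hgne; linarith
  have hd2 : (2 * gstar - 1) ^ 2 > 0 := by positivity
  have hslt : 2 * s < 1 := by nlinarith [sq_nonneg (2 * gstar - 1), sq_nonneg s, hd2]
  have hpd : pstar * (2 * gstar - 1) = gstar - s := by
    rw [hp]; exact div_mul_cancel₀ _ hd
  -- bounds
  have hb : 0 ≤ pstar ∧ pstar ≤ 1 := by
    rcases lt_or_gt_of_ne hd with hdlt | hdgt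
    · -- gstar < 1/2 : g - s ≤ 0 and s ≤ 1 - g
      have h1 : gstar - s ≤ 0 := by nlinarith
      have h2 : s ≤ 1 - gstar := by nlinarith
      constructor <;> nlinarith
    · -- gstar > 1/2 : s ≤ g and 1 - g ≤ s
      have h1 : s ≤ gstar := by nlinarith
      have h2 : 1 - gstar ≤ s := by nlinarith
      constructor <;> nlinarith
  refine ⟨hb.1, hb.2, ?_⟩
  have hp2 : pstar ^ 2 * (2 * gstar - 1) ^ 2 = gstar * (1 - 2 * s) := by
    linear_combination (pstar * (2 * gstar - 1) + gstar - s) * hpd + hs2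
  have hq2 : (1 - pstar) ^ 2 * (2 * gstar - 1) ^ 2 = (1 - gstar) * (1 - 2 * s) := by
    linear_combination (-((1 - pstar) * (2 * gstar - 1) + gstar - 1 + s)) * hpd + hs2
  have hsum : (pstar ^ 2 + (1 - pstar) ^ 2) * (2 * gstar - 1) ^ 2 = 1 - 2 * s := by
    linear_combination hp2 + hq2
  have hne : (1 : ℝ) - 2 * s ≠ 0 := by linarith
  have hsumpos : 0 < pstar ^ 2 + (1 - pstar) ^ 2 := by nlinarith [hsum, hd2]
  rw [div_eq_iff (ne_of_gt hsumpos)]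
  apply mul_right_cancel₀ (pow_ne_zero 2 hd)
  linear_combination hp2 - gstar * hsum
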